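/- arXiv:1802.08892 — 2 statements merged into one kernel-verified Lean document; each statement's English description precedes it below -/
import Mathlib

section
/- Let V be a vector space over a field 𝔽, n ≥ 2, f an n-linear map on V, and ℬ a basis of V, and let W := ⌢V_{[e_i]} be one of the components of the decomposition V = ⊕ ⌢V_{[e_i]} given by the decomposition theorem. Let f′ : W × … × W → W be the restriction of f (well defined since W is strongly f-invariant) and ℬ′ := ℬ ∩ W. Then W is f′-simple if and only if Ann(f′) = 0 and ℬ′ is an i-division basis of W with respect to f′. -/
/- Common setting: `V` is a vector space over a field `𝔽`, and `f` is an
`n`-linear map on `V` where `n = m + 1 ≥ 2` (i.e. `1 ≤ m`).  Tuples of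
length `n - 1 = m` index the last arguments of the set-valued map `F`. -/

open scoped Classical

noncomputable section

variable {𝔽 V I : Type*}

/-- The set `V* = V \ {0}` of nonzero vectors. -/
abbrev Vstar (V : Type*) [Zero V] := {v : V // v ≠ 0}

/-- The disjoint union `ℬ ∪̇ ℬ̄`, encoded by indices: `(false, i)` stands for the
basis vector `e i ∈ ℬ` and `(true, i)` for the formal bar symbol `ē i ∈ ℬ̄`. -/
abbrev BSym (I : Type*) := Bool × I

/-- The bar-swap on `ℬ ∪̇ ℬ̄`. -/
def barSwap {I : Type*} (s : BSym I) : BSym I := (!s.1, s.2)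

variable [Field 𝔽] [AddCommGroup V] [Module 𝔽 V] {m : ℕ}

/-- A basis vector, as an element of `V*`. -/
def bstar (b : Module.Basis I 𝔽 V) (i : I) : Vstar V := ⟨b i, b.ne_zero i⟩

/-- The set-valued map `F : 𝒫(V*) × (ℬ ∪̇ ℬ̄)^{n-1} → 𝒫(V*)` associated to the
`n`-linear map `f` and the basis `b` (here `n = m + 1`). -/
def Fmap (b : Module.Basis I 𝔽 V) (f : MultilinearMap 𝔽 (fun _ : Fin (m + 1) => V) V)
    (U : Set (Vstar V)) (ξ : Fin m → BSym I) : Set (Vstar V) :=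
  if ∀ t, (ξ t).1 = false then
    {w | ∃ (k : Fin (m + 1)) (σ : Equiv.Perm (Fin m)), ∃ u ∈ U,
      f (Fin.insertNth k u.1 fun t => b (ξ (σ t)).2) = w.1}
  else if ∀ t, (ξ t).1 = true then
    {w | ∃ (k : Fin (m + 1)) (σ : Equiv.Perm (Fin m)), ∃ u ∈ U,
      f (Fin.insertNth k w.1 fun t => b (ξ (σ t)).2) = u.1}
  else ∅

/-- Iterated application of `F` along a list of `(n-1)`-tuples. -/
def iterF (b : Module.Basis I 𝔽 V) (f : MultilinearMap 𝔽 (fun _ : Fin (m + 1) => V) V) :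
    Set (Vstar V) → List (Fin m → BSym I) → Set (Vstar V)
  | U, [] => U
  | U, X :: Xs => iterF b f (Fmap b f U X) Xs

/-- `X` is a connection from `e i` to `e j`.  (Since `F(∅,⋯) = ∅`, the requirement
that all intermediate iterated images are nonempty is equivalent to the final
image containing `e j`.) -/
def IsConnection (b : Module.Basis I 𝔽 V) (f : MultilinearMap 𝔽 (fun _ : Fin (m + 1) => V) V)
    (i j : I) (X : List (Fin m → BSym I)) : Prop :=
  X ≠ [] ∧ bstar b j ∈ iterF b f {bstar b i} X

/-- `e i` is connected to `e j`. -/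
def Connected (b : Module.Basis I 𝔽 V) (f : MultilinearMap 𝔽 (fun _ : Fin (m + 1) => V) V)
    (i j : I) : Prop :=
  i = j ∨ ∃ X : List (Fin m → BSym I), IsConnection b f i j X

/-- Two subspaces `W₁, W₂` are `f`-orthogonal. -/
def FOrthogonal (f : MultilinearMap 𝔽 (fun _ : Fin (m + 1) => V) V)
    (W₁ W₂ : Submodule 𝔽 V) : Prop :=
  ∀ k₁ k₂ : Fin (m + 1), k₁ ≠ k₂ →
    ∀ v : Fin (m + 1) → V, v k₁ ∈ W₁ → v k₂ ∈ W₂ → f v = 0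

/-- A subspace `W` is strongly `f`-invariant: `f(V,…,W,…,V) ⊆ W` for every slot. -/
def StronglyInvariant (f : MultilinearMap 𝔽 (fun _ : Fin (m + 1) => V) V)
    (W : Submodule 𝔽 V) : Prop :=
  ∀ (k : Fin (m + 1)) (v : Fin (m + 1) → V), v k ∈ W → f v ∈ W

/-- `V_{[e i]}`, the span of the connection class of `e i`. -/
def classSpan (b : Module.Basis I 𝔽 V) (f : MultilinearMap 𝔽 (fun _ : Fin (m + 1) => V) V)
    (i : I) : Submodule 𝔽 V :=
  Submodule.span 𝔽 (⇑b '' {j | Connected b f i j})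

/-- The projection `Π_{V_{[e c]}} : V → V_{[e c]}` relative to the decomposition
`V = ⊕ V_{[e i]}` (expressed through basis coordinates). -/
def projClass (b : Module.Basis I 𝔽 V) (f : MultilinearMap 𝔽 (fun _ : Fin (m + 1) => V) V)
    (c : I) : V →ₗ[𝔽] V :=
  b.constr 𝔽 fun j => if Connected b f c j then b j else 0

/-- One step of the relation `≈`: the sum over `k₁ < k₂` of
`Π_{V_{[c]}}(f(V,…,V_{[d]},…,V_{[d]},…,V)) + Π_{V_{[d]}}(f(V,…,V_{[c]},…,V_{[c]},…,V))`
is nonzero. -/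
def ApproxStep (b : Module.Basis I 𝔽 V) (f : MultilinearMap 𝔽 (fun _ : Fin (m + 1) => V) V)
    (c d : I) : Prop :=
  ∃ k₁ k₂ : Fin (m + 1), k₁ < k₂ ∧
    ((∃ v : Fin (m + 1) → V, v k₁ ∈ classSpan b f d ∧ v k₂ ∈ classSpan b f d ∧
        projClass b f c (f v) ≠ 0) ∨
     (∃ v : Fin (m + 1) → V, v k₁ ∈ classSpan b f c ∧ v k₂ ∈ classSpan b f c ∧
        projClass b f d (f v) ≠ 0))

/-- `V_{[e i]} ≈ V_{[e j]}`: either they coincide (same connection class) or they are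
linked by a finite chain of classes with nonvanishing projection sums. -/
def Approx (b : Module.Basis I 𝔽 V) (f : MultilinearMap 𝔽 (fun _ : Fin (m + 1) => V) V)
    (i j : I) : Prop :=
  Relation.ReflTransGen (fun c d => Connected b f c d ∨ ApproxStep b f c d) i j

/-- `⌢V_{[e i]} = ⊕_{V_{[e j]} ∈ [V_{[e i]}]} V_{[e j]}`. -/
def hatSpan (b : Module.Basis I 𝔽 V) (f : MultilinearMap 𝔽 (fun _ : Fin (m + 1) => V) V)
    (i : I) : Submodule 𝔽 V :=
  Submodule.span 𝔽 (⇑b '' {j | Approx b f i j})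

/-- Two decompositions of `V` as `f`-orthogonal direct sums of strongly `f`-invariant
subspaces (given as the sets of their summands) are isomorphic: there is a linear
automorphism `h` of `V` commuting with `f` carrying the summands of the first
bijectively onto the summands of the second. -/
def IsoDecomp (f : MultilinearMap 𝔽 (fun _ : Fin (m + 1) => V) V)
    (S T : Set (Submodule 𝔽 V)) : Prop :=
  ∃ h : V ≃ₗ[𝔽] V,
    (∀ v : Fin (m + 1) → V, f (fun k => h (v k)) = h (f v)) ∧
    (Submodule.map (h : V →ₗ[𝔽] V)) '' S = T

/-- `X` is a strongly `f'`-invariant subspace of `W`, where `f'` is the restriction of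
`f` to `W`: `f(W,…,X,…,W) ⊆ X` for every slot. -/
def SInvIn (f : MultilinearMap 𝔽 (fun _ : Fin (m + 1) => V) V)
    (W X : Submodule 𝔽 V) : Prop :=
  ∀ (k : Fin (m + 1)) (v : Fin (m + 1) → V), (∀ t, v t ∈ W) → v k ∈ X → f v ∈ X

/-- `W` is `f'`-simple, `f'` being the restriction of `f` to `W`: the restricted map is
nonzero and the only strongly `f'`-invariant subspaces of `W` are `0` and `W`. -/
def SimpleIn (f : MultilinearMap 𝔽 (fun _ : Fin (m + 1) => V) V)
    (W : Submodule 𝔽 V) : Prop :=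
  (∃ v : Fin (m + 1) → V, (∀ t, v t ∈ W) ∧ f v ≠ 0) ∧
  ∀ X : Submodule 𝔽 V, X ≤ W → SInvIn f W X → X = ⊥ ∨ X = W

/-- The annihilator of the restriction `f'` of `f` to `W`. -/
def annIn (f : MultilinearMap 𝔽 (fun _ : Fin (m + 1) => V) V)
    (W : Submodule 𝔽 V) : Set V :=
  {w | w ∈ W ∧ ∀ (k : Fin (m + 1)) (v : Fin (m + 1) → V),
    (∀ t, v t ∈ W) → v k = w → f v = 0}

/-- `𝓘(w)`: the smallest strongly `f'`-invariant subspace of `W` containing `w`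
(equivalently, the ideal of `(W, f')` generated by `w`). -/
def idealGenIn (f : MultilinearMap 𝔽 (fun _ : Fin (m + 1) => V) V)
    (W : Submodule 𝔽 V) (w : V) : Submodule 𝔽 V :=
  sInf {X : Submodule 𝔽 V | X ≤ W ∧ SInvIn f W X ∧ w ∈ X}

/-- `S` is an `i`-division basis of `W` with respect to the restriction `f'` of `f`:
whenever `c ∈ S`, `b₁, …, b_{n-1} ∈ W` and `f'(b₁,…,c,…,b_{n-1}) = w ≠ 0` with `c` in
some slot `k`, then `c, b₁, …, b_{n-1} ∈ 𝓘(w)`. -/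
def IDivisionBasisIn (f : MultilinearMap 𝔽 (fun _ : Fin (m + 1) => V) V)
    (W : Submodule 𝔽 V) (S : Set V) : Prop :=
  ∀ c ∈ S, ∀ (k : Fin (m + 1)) (v : Fin (m + 1) → V),
    (∀ t, v t ∈ W) → v k = c → f v ≠ 0 → ∀ t, v t ∈ idealGenIn f W (f v)


/-- Auxiliary: the ideal generated by `w` is contained in any qualifying subspace. -/
private lemma idealGenIn_le_of_mem {f : MultilinearMap 𝔽 (fun _ : Fin (m + 1) => V) V}
    {W X : Submodule 𝔽 V} {w : V} (h1 : X ≤ W) (h2 : SInvIn f W X) (h3 : w ∈ X) :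
    idealGenIn f W w ≤ X :=
  sInf_le ⟨h1, h2, h3⟩

private lemma update_mem_of_mem {W : Submodule 𝔽 V} {v : Fin (m + 1) → V}
    (hv : ∀ t, v t ∈ W) {k : Fin (m + 1)} {x : V} (hx : x ∈ W) :
    ∀ t, Function.update v k x t ∈ W := by
  intro t
  rcases eq_or_ne t k with h | h
  · subst h; simpa using hx
  · rw [Function.update_of_ne h]; exact hv t

private lemma exists_ne_fin (hm : 1 ≤ m) (k : Fin (m + 1)) : ∃ t : Fin (m + 1), t ≠ k := by
  rcases eq_or_ne k ⟨0, Nat.succ_pos m⟩ with h | h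
  · exact ⟨⟨1, by omega⟩, by rw [h]; simp [Fin.ext_iff]⟩
  · exact ⟨⟨0, Nat.succ_pos m⟩, Ne.symm h⟩

/-- characterization of the `f'`-simplicity of the components. -/
theorem stmt15 (hm : 1 ≤ m) (b : Module.Basis I 𝔽 V)
    (f : MultilinearMap 𝔽 (fun _ : Fin (m + 1) => V) V) (i : I) :
    SimpleIn f (hatSpan b f i) ↔
      annIn f (hatSpan b f i) = {0} ∧
      IDivisionBasisIn f (hatSpan b f i)
        (Set.range ⇑b ∩ (hatSpan b f i : Set V)) := by
  set W := hatSpan b f i with hWdef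
  have hbiW : b i ∈ W := Submodule.subset_span ⟨i, Relation.ReflTransGen.refl, rfl⟩
  constructor
  · rintro ⟨⟨v₀, hv₀W, hv₀⟩, hmin⟩
    constructor
    · -- Ann(f') = 0
      set A : Submodule 𝔽 V :=
        { carrier := annIn f W
          zero_mem' := ⟨W.zero_mem, fun k v _ hvk => f.map_coord_zero k hvk⟩
          add_mem' := by
            rintro a c ⟨haW, ha⟩ ⟨hcW, hc⟩
            refine ⟨W.add_mem haW hcW, fun k v hv hvk => ?_⟩
            have hveq : f v = f (Function.update v k (a + c)) := by
              rw [← hvk, Function.update_eq_self]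
            rw [hveq, f.map_update_add,
              ha k _ (update_mem_of_mem hv haW) (Function.update_self k a v),
              hc k _ (update_mem_of_mem hv hcW) (Function.update_self k c v), add_zero]
          smul_mem' := by
            rintro r a ⟨haW, ha⟩
            refine ⟨W.smul_mem r haW, fun k v hv hvk => ?_⟩
            have hveq : f v = f (Function.update v k (r • a)) := by
              rw [← hvk, Function.update_eq_self]
            rw [hveq, f.map_update_smul,
              ha k _ (update_mem_of_mem hv haW) (Function.update_self k a v), smul_zero] }
        with hAdef
      have hAW : A ≤ W := fun x hx => hx.1
      have hAinv : SInvIn f W A := by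
        intro k v hv hvk
        have h0 : f v = 0 := hvk.2 k v hv rfl
        rw [h0]; exact A.zero_mem
      rcases hmin A hAW hAinv with hbot | htop
      · apply Set.eq_of_subset_of_subset
        · intro x hx
          have hxA : x ∈ A := hx
          rw [hbot] at hxA
          simpa using hxA
        · intro x hx
          have : x = 0 := hx
          rw [this]
          exact A.zero_mem
      · exfalso
        have h00 : v₀ 0 ∈ A := by rw [htop]; exact hv₀W 0
        exact hv₀ (h00.2 0 v₀ hv₀W rfl)
    · -- i-division basis
      intro c hc k v hvW hvk hfv t
      by_cases hne : {X : Submodule 𝔽 V | X ≤ W ∧ SInvIn f W X ∧ f v ∈ X}.Nonempty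
      · obtain ⟨Y, hY⟩ := hne
        have hIle : idealGenIn f W (f v) ≤ W := le_trans (sInf_le hY) hY.1
        have hIinv : SInvIn f W (idealGenIn f W (f v)) := by
          intro k' v' hv' hk'
          simp only [idealGenIn, Submodule.mem_sInf] at hk' ⊢
          intro Z hZ
          exact hZ.2.1 k' v' hv' (hk' Z hZ)
        have hwI : f v ∈ idealGenIn f W (f v) := by
          simp only [idealGenIn, Submodule.mem_sInf]
          exact fun Z hZ => hZ.2.2
        rcases hmin _ hIle hIinv with hbot | htop
        · exact absurd (Submodule.mem_bot 𝔽 |>.mp (hbot ▸ hwI)) hfv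
        · rw [htop]; exact hvW t
      · have hT : idealGenIn f W (f v) = ⊤ := by
          rw [idealGenIn, Set.not_nonempty_iff_eq_empty.mp hne, sInf_empty]
        rw [hT]; exact Submodule.mem_top
  · rintro ⟨hann, hdiv⟩
    have hwit : ∀ x : V, x ∈ W → x ≠ 0 →
        ∃ (k : Fin (m + 1)) (v : Fin (m + 1) → V),
          (∀ t, v t ∈ W) ∧ v k = x ∧ f v ≠ 0 := by
      intro x hxW hx0
      by_contra h
      push_neg at h
      apply hx0
      have hxa : x ∈ annIn f W := ⟨hxW, fun k v hv hvk => h k v hv hvk⟩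
      rw [hann] at hxa
      exact hxa
    constructor
    · obtain ⟨k, v, hv, -, hf⟩ := hwit (b i) hbiW (b.ne_zero i)
      exact ⟨v, hv, hf⟩
    · intro X hXW hXinv
      by_cases hX : X = ⊥
      · exact Or.inl hX
      refine Or.inr ?_
      obtain ⟨x, hxX, hx0⟩ := (Submodule.ne_bot_iff X).mp hX
      obtain ⟨k, v, hvW, hvk, hfv⟩ := hwit x (hXW hxX) hx0
      -- expand the entries of v in the basis to find a basis element of W inside X
      set A : Fin (m + 1) → Finset I :=
        fun t => if t = k then {i} else (b.repr (v t)).support with hA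
      set g : (t : Fin (m + 1)) → I → V :=
        fun t j => if t = k then x else (b.repr (v t)) j • b j with hg
      have hexp : v = fun t => ∑ j ∈ A t, g t j := by
        funext t
        rcases eq_or_ne t k with h | h
        · subst h
          simp [hA, hg, hvk]
        · simp only [hA, hg, if_neg h]
          conv_lhs => rw [← b.linearCombination_repr (v t)]
          rw [Finsupp.linearCombination_apply, Finsupp.sum]
      have hsum : (∑ r ∈ Fintype.piFinset A, f fun t => g t (r t)) ≠ 0 := by
        rw [← f.map_sum_finset g A, ← hexp]
        exact hfv
      obtain ⟨r, hrmem, hr0⟩ := Finset.exists_ne_zero_of_sum_ne_zero hsum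
      set u : Fin (m + 1) → V := fun t => if t = k then x else b (r t) with hu
      have hscal : (fun t => g t (r t)) =
          fun t => (if t = k then (1 : 𝔽) else (b.repr (v t)) (r t)) • u t := by
        funext t
        rcases eq_or_ne t k with h | h <;> simp [hg, hu, h]
      have hfu0 : f u ≠ 0 := by
        intro h0
        apply hr0
        rw [hscal, f.map_smul_univ, h0, smul_zero]
      have huW : ∀ t, u t ∈ W := by
        intro t
        rcases eq_or_ne t k with h | h
        · simp only [hu, if_pos h]
          exact hXW hxX
        · simp only [hu, if_neg h]
          have hvtW : v t ∈ Submodule.span 𝔽 (⇑b '' {j | Approx b f i j}) := hvW t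
          have hsupp : ↑(b.repr (v t)).support ⊆ {j | Approx b f i j} :=
            b.mem_span_image.mp hvtW
          have hrt : r t ∈ (b.repr (v t)).support := by
            have hmem := Fintype.mem_piFinset.mp hrmem t
            simpa only [hA, if_neg h] using hmem
          exact Submodule.subset_span ⟨r t, hsupp hrt, rfl⟩
      have hfuX : f u ∈ X := hXinv k u huW (by simp only [hu, if_pos rfl]; exact hxX)
      obtain ⟨t₀, ht₀⟩ := exists_ne_fin hm k
      have hut₀ : u t₀ = b (r t₀) := by simp only [hu, if_neg ht₀]
      have hc₀W : b (r t₀) ∈ W := hut₀ ▸ huW t₀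
      have hc₀S : b (r t₀) ∈ Set.range ⇑b ∩ (W : Set V) := ⟨⟨r t₀, rfl⟩, hc₀W⟩
      have hc₀X : b (r t₀) ∈ X := by
        have hall := hdiv (b (r t₀)) hc₀S t₀ u huW hut₀ hfu0 t₀
        rw [hut₀] at hall
        exact idealGenIn_le_of_mem hXW hXinv hfuX hall
      -- now show W ≤ X using the basis element b (r t₀) ∈ X
      have hWX : W ≤ X := by
        intro c hcW
        obtain ⟨k0, v0, hvW0, hvk0, hB⟩ := hwit (b (r t₀)) hc₀W (b.ne_zero _)
        have hBX : f v0 ∈ X := hXinv k0 v0 hvW0 (by rw [hvk0]; exact hc₀X)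
        obtain ⟨t, ht⟩ := exists_ne_fin hm k0
        have hupk : ∀ y : V, Function.update v0 t y k0 = b (r t₀) := fun y => by
          rw [Function.update_of_ne (Ne.symm ht), hvk0]
        by_cases hE : f (Function.update v0 t c) = 0
        · have hfu' : f (Function.update v0 t (v0 t + c)) = f v0 := by
            rw [f.map_update_add, hE, add_zero, Function.update_eq_self]
          have h1 := hdiv (b (r t₀)) hc₀S k0 (Function.update v0 t (v0 t + c))
            (update_mem_of_mem hvW0 (W.add_mem (hvW0 t) hcW)) (hupk _)
            (by rw [hfu']; exact hB) t
          rw [hfu', Function.update_self] at h1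
          have h2 := hdiv (b (r t₀)) hc₀S k0 v0 hvW0 hvk0 hB t
          have hle : idealGenIn f W (f v0) ≤ X := idealGenIn_le_of_mem hXW hXinv hBX
          have hsub := X.sub_mem (hle h1) (hle h2)
          simpa using hsub
        · have hEX : f (Function.update v0 t c) ∈ X :=
            hXinv k0 _ (update_mem_of_mem hvW0 hcW) (by rw [hupk]; exact hc₀X)
          have h1 := hdiv (b (r t₀)) hc₀S k0 (Function.update v0 t c)
            (update_mem_of_mem hvW0 hcW) (hupk _) hE t
          rw [Function.update_self] at h1
          exact idealGenIn_le_of_mem hXW hXinv hEX h1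
      exact le_antisymm hXW hWX
end
end

section
/- Let 𝔄 be an arbitrary n-ary algebra over a field 𝔽 (n ≥ 2), with product [·,…,·], and let ℬ = {e_i : i ∈ I} be any basis of 𝔄. Then, writing f for the product, 𝔄 decomposes as 𝔄 = ⊕_{[𝔄_{[e_i]}] ∈ ℱ/≈} ⌢𝔄_{[e_i]}, where each ⌢𝔄_{[e_i]} is an ideal of 𝔄, and any pair of distinct ideals in this decomposition is f-orthogonal, i.e. [𝔄, …, ⌢𝔄_{[e_i]} in slot k₁, …, ⌢𝔄_{[e_j]} in slot k₂, …, 𝔄] = 0 whenever the classes differ and k₁ ≠ k₂. -/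
/- Common setting: `V` is a vector space over a field `𝔽`, and `f` is an
`n`-linear map on `V` where `n = m + 1 ≥ 2` (i.e. `1 ≤ m`).  Tuples of
length `n - 1 = m` index the last arguments of the set-valued map `F`. -/

open scoped Classical

noncomputable section

variable {𝔽 V I : Type*}

variable [Field 𝔽] [AddCommGroup V] [Module 𝔽 V] {m : ℕ}

section Aux

variable (b : Module.Basis I 𝔽 V) (f : MultilinearMap 𝔽 (fun _ : Fin (m + 1) => V) V)

lemma mem_Fmap_iff {U : Set (Vstar V)} {ξ : Fin m → BSym I} {w : Vstar V} :
    w ∈ Fmap b f U ξ ↔ ∃ u ∈ U, w ∈ Fmap b f {u} ξ := by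
  unfold Fmap
  split_ifs with h1 h2 <;> simp only [Set.mem_setOf_eq, Set.mem_singleton_iff,
    Set.mem_empty_iff_false] <;> try tauto
  · aesop
  · aesop

lemma mem_iterF_iff {X : List (Fin m → BSym I)} {U : Set (Vstar V)} {y : Vstar V} :
    y ∈ iterF b f U X ↔ ∃ u ∈ U, y ∈ iterF b f {u} X := by
  induction X generalizing U with
  | nil => simp [iterF]
  | cons ξ Xs ih =>
    show y ∈ iterF b f (Fmap b f U ξ) Xs ↔ _
    rw [ih]
    constructor
    · rintro ⟨w, hw, hy⟩
      rw [mem_Fmap_iff] at hw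
      obtain ⟨u, hu, hw⟩ := hw
      refine ⟨u, hu, ?_⟩
      show y ∈ iterF b f (Fmap b f {u} ξ) Xs
      rw [ih]
      exact ⟨w, hw, hy⟩
    · rintro ⟨u, hu, hy⟩
      rw [show iterF b f {u} (ξ :: Xs) = iterF b f (Fmap b f {u} ξ) Xs from rfl, ih] at hy
      obtain ⟨w, hw, hy⟩ := hy
      exact ⟨w, mem_Fmap_iff b f |>.2 ⟨u, hu, hw⟩, hy⟩

lemma iterF_append (U : Set (Vstar V)) (X Y : List (Fin m → BSym I)) :
    iterF b f U (X ++ Y) = iterF b f (iterF b f U X) Y := by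
  induction X generalizing U with
  | nil => rfl
  | cons ξ Xs ih => exact ih (Fmap b f U ξ)

lemma mem_Fmap_barSwap (hm : 1 ≤ m) {u w : Vstar V} {ξ : Fin m → BSym I} :
    w ∈ Fmap b f {u} ξ ↔ u ∈ Fmap b f {w} (barSwap ∘ ξ) := by
  have t0 : Fin m := ⟨0, hm⟩
  unfold Fmap
  by_cases h1 : ∀ t, (ξ t).1 = false
  · have h2 : ¬ ∀ t, ((barSwap ∘ ξ) t).1 = false := by
      intro h; have := h t0; simp [barSwap, h1 t0] at this
    have h3 : ∀ t, ((barSwap ∘ ξ) t).1 = true := by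
      intro t; simp [barSwap, h1 t]
    simp only [if_pos h1, if_neg h2, if_pos h3, Set.mem_setOf_eq, Set.mem_singleton_iff]
    constructor
    · rintro ⟨k, σ, u', rfl, he⟩; exact ⟨k, σ, w, rfl, he⟩
    · rintro ⟨k, σ, w', rfl, he⟩; exact ⟨k, σ, u, rfl, he⟩
  · by_cases h2 : ∀ t, (ξ t).1 = true
    · have h3 : ∀ t, ((barSwap ∘ ξ) t).1 = false := by
        intro t; simp [barSwap, h2 t]
      simp only [if_neg h1, if_pos h2, if_pos h3, Set.mem_setOf_eq, Set.mem_singleton_iff]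
      constructor
      · rintro ⟨k, σ, u', rfl, he⟩; exact ⟨k, σ, w, rfl, he⟩
      · rintro ⟨k, σ, w', rfl, he⟩; exact ⟨k, σ, u, rfl, he⟩
    · have h3 : ¬ ∀ t : Fin m, (barSwap (ξ t)).1 = false := by
        intro h; apply h2; intro t; have := h t
        simpa [barSwap] using this
      have h4 : ¬ ∀ t : Fin m, (barSwap (ξ t)).1 = true := by
        intro h; apply h1; intro t; have := h t
        simpa [barSwap] using this
      rw [if_neg h1, if_neg h2]
      simp only [Function.comp_apply, if_neg h3, if_neg h4]
      simp

lemma iterF_rev (hm : 1 ≤ m) :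
    ∀ (X : List (Fin m → BSym I)) (x y : Vstar V), y ∈ iterF b f {x} X →
      x ∈ iterF b f {y} ((X.map (fun ξ => barSwap ∘ ξ)).reverse) := by
  intro X
  induction X with
  | nil => intro x y h; simpa [iterF] using (h.symm : x = y) ▸ rfl
  | cons ξ Xs ih =>
    intro x y h
    rw [show iterF b f {x} (ξ :: Xs) = iterF b f (Fmap b f {x} ξ) Xs from rfl,
      mem_iterF_iff] at h
    obtain ⟨w, hw, hy⟩ := h
    have h1 : w ∈ iterF b f {y} ((Xs.map (fun ξ => barSwap ∘ ξ)).reverse) := ih w y hy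
    have h2 : x ∈ Fmap b f {w} (barSwap ∘ ξ) := (mem_Fmap_barSwap b f hm).1 hw
    have : ((ξ :: Xs).map (fun ξ => barSwap ∘ ξ)).reverse
        = (Xs.map (fun ξ => barSwap ∘ ξ)).reverse ++ [barSwap ∘ ξ] := by simp
    rw [this, iterF_append]
    show x ∈ Fmap b f _ (barSwap ∘ ξ)
    exact (mem_Fmap_iff b f).2 ⟨w, h1, h2⟩

lemma connected_refl (i : I) : Connected b f i i := Or.inl rfl

lemma connected_symm (hm : 1 ≤ m) {i j : I} (h : Connected b f i j) : Connected b f j i := by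
  rcases h with rfl | ⟨X, hX, hmem⟩
  · exact Or.inl rfl
  · refine Or.inr ⟨(X.map (fun ξ => barSwap ∘ ξ)).reverse, by simpa using hX, ?_⟩
    exact iterF_rev b f hm X _ _ hmem

lemma connected_trans {i j k : I} (h1 : Connected b f i j) (h2 : Connected b f j k) :
    Connected b f i k := by
  rcases h1 with rfl | ⟨X, hX, hmX⟩
  · exact h2
  rcases h2 with rfl | ⟨Y, hY, hmY⟩
  · exact Or.inr ⟨X, hX, hmX⟩
  refine Or.inr ⟨X ++ Y, by simp [hX], ?_⟩
  rw [iterF_append, mem_iterF_iff]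
  rw [mem_iterF_iff] at hmY
  obtain ⟨u, hu, hy⟩ := hmY
  have hu' : u = bstar b j := hu
  subst hu'
  exact ⟨bstar b j, hmX, hy⟩
lemma connected_of_ne_zero (hm : 1 ≤ m) (u : Fin (m + 1) → I)
    (hw : f (fun t => b (u t)) ≠ 0) (s t : Fin (m + 1)) :
    Connected b f (u s) (u t) := by
  set w : Vstar V := ⟨f (fun t => b (u t)), hw⟩ with hwdef
  have stepA : w ∈ Fmap b f {bstar b (u s)} (fun r => ((false : Bool), u (s.succAbove r))) := by
    unfold Fmap
    rw [if_pos (by intro r; rfl)]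
    refine ⟨s, Equiv.refl _, bstar b (u s), rfl, ?_⟩
    show f (Fin.insertNth s (b (u s)) fun r => b (u (s.succAbove r))) = f (fun t => b (u t))
    congr 1
    exact Fin.insertNth_self_removeNth s (fun t => b (u t))
  have stepB : bstar b (u t) ∈ Fmap b f {w} (fun r => ((true : Bool), u (t.succAbove r))) := by
    unfold Fmap
    rw [if_neg (by intro h; exact absurd (h ⟨0, hm⟩) (by simp)), if_pos (by intro r; rfl)]
    refine ⟨t, Equiv.refl _, w, rfl, ?_⟩
    show f (Fin.insertNth t (b (u t)) fun r => b (u (t.succAbove r))) = f (fun t => b (u t))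
    congr 1
    exact Fin.insertNth_self_removeNth t (fun t => b (u t))
  refine Or.inr ⟨[fun r => ((false : Bool), u (s.succAbove r)),
    fun r => ((true : Bool), u (t.succAbove r))], by simp, ?_⟩
  show bstar b (u t) ∈ Fmap b f (Fmap b f {bstar b (u s)} _) _
  exact (mem_Fmap_iff b f).2 ⟨w, stepA, stepB⟩

lemma repr_projClass (c : I) (x : V) :
    b.repr (projClass b f c x) c = b.repr x c := by
  rw [projClass, Module.Basis.constr_apply, map_finsuppSum, Finsupp.sum_apply]
  have : ∀ j (a : 𝔽),
      (b.repr (a • if Connected b f c j then b j else 0)) c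
        = (fun j a => if j = c then a else 0) j a := by
    intro j a
    by_cases hj : j = c
    · subst hj
      simp [if_pos (connected_refl b f j), Module.Basis.repr_self]
    · split_ifs with hcj
      · simp [Module.Basis.repr_self, Finsupp.single_apply, hj]
      · simp [hj]
  have h2 : ((b.repr x).sum fun j a => (b.repr (a • if Connected b f c j then b j else 0)) c)
      = (b.repr x).sum fun j a => if j = c then a else 0 :=
    Finsupp.sum_congr fun j _ => this j _
  rw [h2]
  exact Finsupp.sum_ite_self_eq' _ c

lemma projClass_ne_zero {c : I} {x : V} (hc : b.repr x c ≠ 0) :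
    projClass b f c x ≠ 0 := by
  intro h
  apply hc
  rw [← repr_projClass b f c x, h, map_zero, Finsupp.coe_zero, Pi.zero_apply]

lemma approx_of_mem_support (hm : 1 ≤ m) (u : Fin (m + 1) → I) (k : Fin (m + 1)) {c : I}
    (hc : c ∈ (b.repr (f (fun t => b (u t)))).support) :
    Approx b f (u k) c := by
  have hw : f (fun t => b (u t)) ≠ 0 := by
    intro h
    rw [h] at hc
    simp at hc
  have h01 : (0 : Fin (m + 1)) < 1 := by
    rw [Fin.lt_iff_val_lt_val, Fin.val_zero, Fin.val_one', Nat.mod_eq_of_lt (by omega)]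
    omega
  have hmemcs : ∀ r : Fin (m + 1), b (u r) ∈ classSpan b f (u k) := fun r =>
    Submodule.subset_span ⟨u r, connected_of_ne_zero b f hm u hw k r, rfl⟩
  refine Relation.ReflTransGen.single (Or.inr ⟨0, 1, h01, Or.inr
    ⟨fun t => b (u t), hmemcs 0, hmemcs 1, ?_⟩⟩)
  exact projClass_ne_zero b f (Finsupp.mem_support_iff.1 hc)
lemma approxStep_symm {c d : I} (h : ApproxStep b f c d) : ApproxStep b f d c := by
  obtain ⟨k₁, k₂, hk, hor⟩ := h
  exact ⟨k₁, k₂, hk, hor.symm⟩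

lemma approx_symm (hm : 1 ≤ m) {i j : I} (h : Approx b f i j) : Approx b f j i := by
  refine Std.Symm.symm (self := @Relation.ReflTransGen.stdSymm _ _ ⟨?_⟩) _ _ h
  intro c d hcd
  rcases hcd with hc | hc
  · exact Or.inl (connected_symm b f hm hc)
  · exact Or.inr (approxStep_symm b f hc)

lemma hatSpan_eq_of_approx (hm : 1 ≤ m) {i j : I} (h : Approx b f i j) :
    hatSpan b f i = hatSpan b f j := by
  unfold hatSpan
  congr 1
  ext c
  constructor
  · rintro ⟨d, hd, rfl⟩
    exact ⟨d, Relation.ReflTransGen.trans (approx_symm b f hm h) hd, rfl⟩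
  · rintro ⟨d, hd, rfl⟩
    exact ⟨d, Relation.ReflTransGen.trans h hd, rfl⟩

lemma mem_hatSpan_iff {i : I} {x : V} :
    x ∈ hatSpan b f i ↔ ↑(b.repr x).support ⊆ {j | Approx b f i j} := by
  rw [hatSpan, Module.Basis.mem_span_image]

lemma multilin_mem (g : MultilinearMap 𝔽 (fun _ : Fin (m + 1) => V) V)
    (s : Fin (m + 1) → Set V) (P : Submodule 𝔽 V)
    (h : ∀ u : Fin (m + 1) → V, (∀ t, u t ∈ s t) → g u ∈ P) :
    ∀ v : Fin (m + 1) → V, (∀ t, v t ∈ Submodule.span 𝔽 (s t)) → g v ∈ P := by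
  suffices H : ∀ (T : Finset (Fin (m + 1))) (v : Fin (m + 1) → V),
      (∀ t ∈ T, v t ∈ Submodule.span 𝔽 (s t)) → (∀ t ∉ T, v t ∈ s t) → g v ∈ P by
    intro v hv
    exact H Finset.univ v (fun t _ => hv t) (fun t ht => absurd (Finset.mem_univ t) ht)
  intro T
  induction T using Finset.induction_on with
  | empty => intro v _ h2; exact h v (fun t => h2 t (by simp))
  | @insert a T' ha ih =>
    intro v h1 h2
    have hva : v a ∈ Submodule.span 𝔽 (s a) := h1 a (Finset.mem_insert_self a T')
    have key : ∀ x ∈ Submodule.span 𝔽 (s a), g (Function.update v a x) ∈ P := by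
      intro x hx
      induction hx using Submodule.span_induction with
      | mem y hy =>
        apply ih
        · intro t ht
          rw [Function.update_of_ne (show t ≠ a from fun he => ha (he ▸ ht))]
          exact h1 t (Finset.mem_insert_of_mem ht)
        · intro t ht
          by_cases hta : t = a
          · subst hta; rw [Function.update_self]; exact hy
          · rw [Function.update_of_ne hta]
            exact h2 t (fun hmem => ht (by
              rcases Finset.mem_insert.1 hmem with h' | h'
              · exact absurd h' hta
              · exact h'))
      | zero => rw [g.map_update_zero]; exact P.zero_mem
      | add x y hx hy ihx ihy => rw [g.map_update_add]; exact P.add_mem ihx ihy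
      | smul r x hx ihx => rw [g.map_update_smul]; exact P.smul_mem r ihx
    have hfin := key (v a) hva
    rwa [Function.update_eq_self] at hfin
lemma hat_invariant (hm : 1 ≤ m) (i : I) : StronglyInvariant f (hatSpan b f i) := by
  intro k v hv
  set s : Fin (m + 1) → Set V :=
    fun t => if t = k then ⇑b '' {j | Approx b f i j} else Set.range ⇑b with hs
  refine multilin_mem f s (hatSpan b f i) ?_ v ?_
  · intro u hu
    have hex : ∀ t, ∃ j : I, u t = b j ∧ (t = k → Approx b f i j) := by
      intro t
      have h := hu t
      by_cases htk : t = k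
      · subst htk
        simp only [hs, if_pos rfl] at h
        obtain ⟨j, hj, hbj⟩ := h
        exact ⟨j, hbj.symm, fun _ => hj⟩
      · simp only [hs, if_neg htk] at h
        obtain ⟨j, hbj⟩ := h
        exact ⟨j, hbj.symm, fun h' => absurd h' htk⟩
    choose w hw1 hw2 using hex
    rw [funext hw1]
    by_cases hz : f (fun t => b (w t)) = 0
    · rw [hz]; exact zero_mem _
    · set x := f (fun t => b (w t)) with hx
      rw [← b.linearCombination_repr x, Finsupp.linearCombination_apply, Finsupp.sum]
      refine Submodule.sum_mem _ fun c hc => Submodule.smul_mem _ _ (Submodule.subset_span ⟨c, ?_, rfl⟩)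
      exact Relation.ReflTransGen.trans (hw2 k rfl) (approx_of_mem_support b f hm w k hc)
  · intro t
    by_cases htk : t = k
    · subst htk
      simp only [hs, if_pos rfl]
      exact hv
    · simp only [hs, if_neg htk]
      rw [Module.Basis.span_eq]
      exact Submodule.mem_top

lemma hat_orth (hm : 1 ≤ m) (i j : I) (hij : ¬ Approx b f i j) :
    FOrthogonal f (hatSpan b f i) (hatSpan b f j) := by
  intro k₁ k₂ hk v h1 h2
  set s : Fin (m + 1) → Set V :=
    fun t => if t = k₁ then ⇑b '' {c | Approx b f i c}
      else if t = k₂ then ⇑b '' {c | Approx b f j c} else Set.range ⇑b with hs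
  have hmem : f v ∈ (⊥ : Submodule 𝔽 V) := by
    refine multilin_mem f s ⊥ ?_ v ?_
    · intro u hu
      have hex : ∀ t, ∃ c : I, u t = b c ∧ (t = k₁ → Approx b f i c) ∧
          (t = k₂ → Approx b f j c) := by
        intro t
        have h := hu t
        by_cases ht1 : t = k₁
        · subst ht1
          simp only [hs, if_pos rfl] at h
          obtain ⟨c, hc, hbc⟩ := h
          exact ⟨c, hbc.symm, fun _ => hc, fun h' => absurd h' hk⟩
        · by_cases ht2 : t = k₂
          · subst ht2
            simp only [hs, if_neg ht1, if_pos rfl] at h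
            obtain ⟨c, hc, hbc⟩ := h
            exact ⟨c, hbc.symm, fun h' => absurd h' ht1, fun _ => hc⟩
          · simp only [hs, if_neg ht1, if_neg ht2] at h
            obtain ⟨c, hbc⟩ := h
            exact ⟨c, hbc.symm, fun h' => absurd h' ht1, fun h' => absurd h' ht2⟩
      choose w hw1 hw2 hw3 using hex
      rw [funext hw1]
      by_contra hz
      rw [Submodule.mem_bot] at hz
      have hconn : Connected b f (w k₁) (w k₂) :=
        connected_of_ne_zero b f hm w hz k₁ k₂
      exact hij (Relation.ReflTransGen.trans (hw2 k₁ rfl)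
        (Relation.ReflTransGen.trans (Relation.ReflTransGen.single (Or.inl hconn))
          (approx_symm b f hm (hw3 k₂ rfl))))
    · intro t
      by_cases ht1 : t = k₁
      · subst ht1
        simp only [hs, if_pos rfl]
        exact h1
      · by_cases ht2 : t = k₂
        · subst ht2
          simp only [hs, if_neg ht1, if_pos rfl]
          exact h2
        · simp only [hs, if_neg ht1, if_neg ht2]
          rw [Module.Basis.span_eq]
          exact Submodule.mem_top
  simpa using hmem

end Aux

/-- decomposition of an arbitrary `n`-ary algebra into `f`-orthogonal
ideals (strongly invariant subspaces = ideals). -/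
theorem stmt18 (hm : 1 ≤ m) (b : Module.Basis I 𝔽 V)
    (f : MultilinearMap 𝔽 (fun _ : Fin (m + 1) => V) V) :
    iSupIndep (fun W : {W : Submodule 𝔽 V // ∃ i, W = hatSpan b f i} => W.1) ∧
    (⨆ W : {W : Submodule 𝔽 V // ∃ i, W = hatSpan b f i}, W.1) = ⊤ ∧
    (∀ i, StronglyInvariant f (hatSpan b f i)) ∧
    (∀ i j, ¬ Approx b f i j → FOrthogonal f (hatSpan b f i) (hatSpan b f j)) := by
  refine ⟨?_, ?_, fun i => hat_invariant b f hm i, fun i j hij => hat_orth b f hm i j hij⟩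
  · rw [iSupIndep_def]
    intro W
    obtain ⟨i, hi⟩ := W.2
    have hsup : (⨆ (W') (_ : W' ≠ W),
        (W' : {W : Submodule 𝔽 V // ∃ i, W = hatSpan b f i}).1)
          ≤ Submodule.span 𝔽 (⇑b '' {c | ¬ Approx b f i c}) := by
      refine iSup_le fun W' => iSup_le fun hne => ?_
      obtain ⟨j, hj⟩ := W'.2
      rw [hj]
      refine Submodule.span_mono (Set.image_mono ?_)
      intro c hc hic
      exact hne (Subtype.ext (hj.trans ((hatSpan_eq_of_approx b f hm
        (Relation.ReflTransGen.trans hic (approx_symm b f hm hc))).symm.trans hi.symm)))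
    rw [Submodule.disjoint_def]
    intro x hx1 hx2
    have hx2' := hsup hx2
    rw [Module.Basis.mem_span_image] at hx2'
    rw [hi, mem_hatSpan_iff] at hx1
    have hrepr : b.repr x = 0 := by
      ext c
      by_contra hc
      have hcs : c ∈ (b.repr x).support := Finsupp.mem_support_iff.2 hc
      exact hx2' hcs (hx1 hcs)
    simpa using congrArg b.repr.symm hrepr
  · rw [eq_top_iff, ← b.span_eq]
    refine Submodule.span_le.2 ?_
    rintro x ⟨j, rfl⟩
    have hj : b j ∈ hatSpan b f j :=
      Submodule.subset_span ⟨j, Relation.ReflTransGen.refl, rfl⟩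
    exact le_iSup (fun W : {W : Submodule 𝔽 V // ∃ i, W = hatSpan b f i} => W.1)
      ⟨hatSpan b f j, ⟨j, rfl⟩⟩ hj
end
end
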